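/- A two-dimensional domino-complete substitution σ is consistent if and only if it is consistent on every 2×2 pattern, i.e., on every pattern whose support is a translate of {0,1}×{0,1}. -/

import Mathlib

open scoped Classical

/-- A combinatorial substitution on alphabet `A` with vectors in `V`:
a base rule sending each letter to a pattern, together with a deterministic
finite set of concatenation rules.  `rule t t' u = some v` encodes the
concatenation rule `(t, t', u) ↦ v`. -/
structure Subst (A : Type*) (V : Type*) [AddCommGroup V] where
  /-- the base rule -/
  base : A → Finset (V × A)
  /-- the image of a letter is a pattern: its cells have distinct vectors -/
  basePat : ∀ t : A, ∀ c ∈ base t, ∀ c' ∈ base t, c.1 = c'.1 → c = c'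
  /-- the concatenation rules, as a partial function -/
  rule : A → A → V → Option V
  /-- there are finitely many concatenation rules -/
  finiteRules : {u : V | ∃ t t', rule t t' u ≠ none}.Finite
  /-- determinism: no two rules with left-hand sides `(t,t',u)` and `(t,t',-u)` -/
  det : ∀ t t' u, (rule t t' u).isSome → (rule t t' (-u)).isSome → u = -u

/-- A pattern is a finite set of cells with pairwise distinct vectors. -/
def IsPattern {V A : Type*} (P : Finset (V × A)) : Prop :=
  ∀ c ∈ P, ∀ c' ∈ P, c.1 = c'.1 → c = c'

namespace Subst

variable {A V : Type*} [AddCommGroup V]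

/-- `σ_rule(c, c')`: the relative position of the images of the two cells
`c`, `c'`, when some concatenation rule applies to them. -/
def ruleVec (σ : Subst A V) (c c' : V × A) : Option V :=
  match σ.rule c.2 c'.2 (c'.1 - c.1) with
  | some v => some v
  | none => (σ.rule c'.2 c.2 (c.1 - c'.1)).map (fun v => -v)

/-- The image vector `ω_σ(γ)` of a path `γ`. -/
def omega (σ : Subst A V) (γ : List (V × A)) : V :=
  ((γ.zip γ.tail).map (fun p => (σ.ruleVec p.1 p.2).getD 0)).sum

/-- A `C_σ`-path: a nonempty sequence of cells in which any two consecutive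
cells form a translated copy of a starting pattern of `σ`, and any two cells
with the same vector are equal. -/
def IsPath (σ : Subst A V) (γ : List (V × A)) : Prop :=
  γ ≠ [] ∧ γ.Chain' (fun c c' => (σ.ruleVec c c').isSome) ∧
    ∀ c ∈ γ, ∀ c' ∈ γ, c.1 = c'.1 → c = c'

/-- A `C_σ`-path of the pattern `P`. -/
def IsPathOf (σ : Subst A V) (P : Finset (V × A)) (γ : List (V × A)) : Prop :=
  σ.IsPath γ ∧ ∀ c ∈ γ, c ∈ P

/-- A `C_σ`-loop of the pattern `P`. -/
def IsLoopOf (σ : Subst A V) (P : Finset (V × A)) (γ : List (V × A)) : Prop :=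
  σ.IsPathOf P γ ∧ γ.head? = γ.getLast?

/-- `P` is `C_σ`-covered: any two of its cells are joined by a `C_σ`-path of `P`. -/
def Covered (σ : Subst A V) (P : Finset (V × A)) : Prop :=
  ∀ c ∈ P, ∀ c' ∈ P,
    ∃ γ, σ.IsPathOf P γ ∧ γ.head? = some c ∧ γ.getLast? = some c'

/-- `σ` is consistent on `P`: any two `C_σ`-paths of `P` with the same first
and last cells have the same image vector. -/
def ConsistentOn (σ : Subst A V) (P : Finset (V × A)) : Prop :=
  ∀ γ γ' : List (V × A), σ.IsPathOf P γ → σ.IsPathOf P γ' →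
    γ.head? = γ'.head? → γ.getLast? = γ'.getLast? → σ.omega γ = σ.omega γ'

/-- `σ` is consistent: it is consistent on every `C_σ`-covered pattern. -/
def Consistent (σ : Subst A V) : Prop :=
  ∀ P : Finset (V × A), IsPattern P → σ.Covered P → σ.ConsistentOn P

/-- The support of the image of a letter. -/
noncomputable def supp (σ : Subst A V) (t : A) : Finset V :=
  (σ.base t).image Prod.fst

/-- `σ` is non-overlapping on `P`: the images of two distinct cells of `P`
joined by a `C_σ`-path of `P` have disjoint supports. -/
def NonOverlappingOn (σ : Subst A V) (P : Finset (V × A)) : Prop :=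
  ∀ c ∈ P, ∀ c' ∈ P, c ≠ c' → ∀ γ, σ.IsPathOf P γ →
    γ.head? = some c → γ.getLast? = some c' →
    ∀ b ∈ σ.supp c'.2, σ.omega γ + b ∉ σ.supp c.2

/-- `σ` is non-overlapping: it is non-overlapping on every `C_σ`-covered pattern. -/
def NonOverlapping (σ : Subst A V) : Prop :=
  ∀ P : Finset (V × A), IsPattern P → σ.Covered P → σ.NonOverlappingOn P

end Subst

/-- A domino: a two-cell two-dimensional pattern whose vectors differ by
`(1,0)`, `(-1,0)`, `(0,1)` or `(0,-1)`. -/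
def IsDomino {A : Type*} (P : Finset ((ℤ × ℤ) × A)) : Prop :=
  ∃ (v u : ℤ × ℤ) (t t' : A), (u = (1, 0) ∨ u = (0, 1)) ∧
    P = {(v, t), (v + u, t')}

/-- A `2 × 2` pattern: a pattern whose support is a translate of
`{0,1} × {0,1}`. -/
def IsTwoByTwo {A : Type*} (P : Finset ((ℤ × ℤ) × A)) : Prop :=
  IsPattern P ∧ ∃ w : ℤ × ℤ,
    P.image Prod.fst = ({w, w + (1, 0), w + (0, 1), w + (1, 1)} : Finset (ℤ × ℤ))

/-- A two-dimensional substitution is domino-complete when its starting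
patterns are exactly all the dominoes. -/
def Subst.DominoComplete {A : Type*} (σ : Subst A (ℤ × ℤ)) : Prop :=
  (∀ (t t' : A) (u : ℤ × ℤ), σ.rule t t' u ≠ none →
      u = (1, 0) ∨ u = (-1, 0) ∨ u = (0, 1) ∨ u = (0, -1)) ∧
  ∀ t t' : A,
    (σ.ruleVec ((0, 0), t) ((1, 0), t')).isSome ∧
    (σ.ruleVec ((0, 0), t) ((0, 1), t')).isSome

noncomputable def cumsum {M : Type*} [AddCommGroup M] (g : ℤ → M) : ℤ → M
  | Int.ofNat n => ∑ i ∈ Finset.range n, g i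
  | Int.negSucc n => -∑ i ∈ Finset.range (n+1), g (-(i+1))

@[simp] lemma cumsum_zero {M : Type*} [AddCommGroup M] (g : ℤ → M) : cumsum g 0 = 0 := by
  show cumsum g (Int.ofNat 0) = 0
  simp [cumsum]

lemma cumsum_succ {M : Type*} [AddCommGroup M] (g : ℤ → M) (n : ℤ) :
    cumsum g (n + 1) = cumsum g n + g n := by
  cases n with
  | ofNat k =>
    have h : (Int.ofNat k) + 1 = Int.ofNat (k+1) := by simp
    rw [h]
    simp [cumsum, Finset.sum_range_succ]
  | negSucc k =>
    cases k with
    | zero =>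
      have h : Int.negSucc 0 + 1 = Int.ofNat 0 := by decide
      rw [h]
      simp [cumsum]
    | succ j =>
      have h : Int.negSucc (j+1) + 1 = Int.negSucc j := by
        simp [Int.negSucc_eq]
      rw [h]
      simp only [cumsum, Finset.sum_range_succ, Int.negSucc_eq]
      push_cast
      abel

section Helpers

variable {A : Type*} (σ : Subst A (ℤ × ℤ))

lemma ruleVec_shift (w v v' : ℤ × ℤ) (t t' : A) :
    σ.ruleVec (v + w, t) (v' + w, t') = σ.ruleVec (v, t) (v', t') := by
  unfold Subst.ruleVec
  rw [show v' + w - (v + w) = v' - v by ring, show v + w - (v' + w) = v - v' by ring]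

lemma ruleVec_symm_isSome {c c' : (ℤ × ℤ) × A} (h : (σ.ruleVec c c').isSome) :
    (σ.ruleVec c' c).isSome := by
  unfold Subst.ruleVec at h ⊢
  cases h2 : σ.rule c'.2 c.2 (c.1 - c'.1) with
  | some v => simp
  | none =>
    cases h1 : σ.rule c.2 c'.2 (c'.1 - c.1) with
    | some v => simp [h1]
    | none => rw [h1, h2] at h; simp at h

lemma isSome_E (hdc : σ.DominoComplete) (v u : ℤ × ℤ) (t t' : A)
    (hu : u = (1,0) ∨ u = (0,1)) : (σ.ruleVec (v, t) (v + u, t')).isSome := by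
  have hs := ruleVec_shift σ v ((0,0) : ℤ × ℤ) u t t'
  rw [show ((0,0) : ℤ × ℤ) + v = v from zero_add v, add_comm u v] at hs
  rw [hs]
  rcases hu with h | h <;> rw [h]
  · exact (hdc.2 t t').1
  · exact (hdc.2 t t').2

lemma diff_of_isSome (hdc : σ.DominoComplete) {c c' : (ℤ × ℤ) × A}
    (h : (σ.ruleVec c c').isSome) :
    c'.1 - c.1 = (1,0) ∨ c'.1 - c.1 = (-1,0) ∨ c'.1 - c.1 = (0,1) ∨ c'.1 - c.1 = (0,-1) := by
  unfold Subst.ruleVec at h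
  cases h1 : σ.rule c.2 c'.2 (c'.1 - c.1) with
  | some v => exact hdc.1 _ _ _ (by rw [h1]; exact Option.some_ne_none v)
  | none =>
    rw [h1] at h
    simp only [Option.isSome_map] at h
    have h2 : σ.rule c'.2 c.2 (c.1 - c'.1) ≠ none := by
      intro hn; rw [hn] at h; simp at h
    have := hdc.1 _ _ _ h2
    have hneg : c'.1 - c.1 = -(c.1 - c'.1) := by ring
    rcases this with h3 | h3 | h3 | h3 <;> rw [hneg, h3]
    · right; left; rfl
    · left; rfl
    · right; right; right; rfl
    · right; right; left; rfl

end Helpers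

section Squares

variable {A : Type*} (σ : Subst A (ℤ × ℤ)) (τ : ℤ × ℤ → A)

lemma omega_single (c : (ℤ × ℤ) × A) : σ.omega [c] = 0 := by simp [Subst.omega]

lemma omega_pair (a b : (ℤ × ℤ) × A) :
    σ.omega [a, b] = (σ.ruleVec a b).getD 0 := by simp [Subst.omega]

lemma omega_triple (a b c : (ℤ × ℤ) × A) :
    σ.omega [a, b, c] = (σ.ruleVec a b).getD 0 + (σ.ruleVec b c).getD 0 := by
  simp [Subst.omega]

/-- the `2×2` square pattern based at `v` with types given by `τ`. -/
noncomputable def sqPat (v : ℤ × ℤ) : Finset ((ℤ × ℤ) × A) :=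
  {(v, τ v), (v + (1,0), τ (v + (1,0))), (v + (0,1), τ (v + (0,1))),
    (v + (1,1), τ (v + (1,1)))}

lemma mem_sq_of (v u : ℤ × ℤ) (h : u = v ∨ u = v + (1,0) ∨ u = v + (0,1) ∨ u = v + (1,1)) :
    (u, τ u) ∈ sqPat τ v := by
  rcases h with h | h | h | h <;> subst h <;> simp [sqPat]

lemma sq_snd (v : ℤ × ℤ) : ∀ c ∈ sqPat τ v, c = (c.1, τ c.1) := by
  intro c hc
  simp only [sqPat, Finset.mem_insert, Finset.mem_singleton] at hc
  rcases hc with h | h | h | h <;> subst h <;> rfl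

lemma sq_twoByTwo (v : ℤ × ℤ) : IsTwoByTwo (sqPat τ v) := by
  constructor
  · intro c hc c' hc' h
    rw [sq_snd τ v c hc, sq_snd τ v c' hc', h]
  · exact ⟨v, by simp [sqPat, Finset.image_insert]⟩

end Squares

section Wdefs

variable {A : Type*} (σ : Subst A (ℤ × ℤ)) (τ : ℤ × ℤ → A)

/-- horizontal edge weight -/
noncomputable def W1 (v : ℤ × ℤ) : ℤ × ℤ :=
  (σ.ruleVec (v, τ v) (v + (1,0), τ (v + (1,0)))).getD 0

/-- vertical edge weight -/
noncomputable def W2 (v : ℤ × ℤ) : ℤ × ℤ :=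
  (σ.ruleVec (v, τ v) (v + (0,1), τ (v + (0,1)))).getD 0

lemma antisym (hdc : σ.DominoComplete)
    (h2 : ∀ P : Finset ((ℤ × ℤ) × A), IsTwoByTwo P → σ.ConsistentOn P)
    (v u : ℤ × ℤ) (hu : u = (1,0) ∨ u = (0,1)) :
    (σ.ruleVec (v + u, τ (v + u)) (v, τ v)).getD 0 =
      -((σ.ruleVec (v, τ v) (v + u, τ (v + u))).getD 0) := by
  set a := (v, τ v) with ha
  set b := (v + u, τ (v + u)) with hb
  have hma : a ∈ sqPat τ v := mem_sq_of τ v v (Or.inl rfl)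
  have hmb : b ∈ sqPat τ v := by
    apply mem_sq_of; rcases hu with h | h <;> subst h
    · exact Or.inr (Or.inl rfl)
    · exact Or.inr (Or.inr (Or.inl rfl))
  have iss1 : (σ.ruleVec a b).isSome := isSome_E σ hdc v u _ _ hu
  have iss2 : (σ.ruleVec b a).isSome := ruleVec_symm_isSome σ iss1
  have hp1 : σ.IsPathOf (sqPat τ v) [a, b, a] := by
    refine ⟨⟨by simp, ?_, ?_⟩, ?_⟩
    · unfold List.Chain'; rw [List.isChain_cons_cons]; exact ⟨iss1, by simpa using iss2⟩
    · intro c hc c' hc' h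
      simp only [List.mem_cons, List.mem_singleton, List.not_mem_nil, or_false] at hc hc'
      have m1 : c ∈ sqPat τ v := by rcases hc with h1 | h1 | h1 <;> subst h1 <;> assumption
      have m2 : c' ∈ sqPat τ v := by rcases hc' with h1 | h1 | h1 <;> subst h1 <;> assumption
      rw [sq_snd τ v c m1, sq_snd τ v c' m2, h]
    · intro c hc
      simp only [List.mem_cons, List.not_mem_nil, or_false] at hc
      rcases hc with h1 | h1 | h1 <;> subst h1 <;> assumption
  have hp2 : σ.IsPathOf (sqPat τ v) [a] := by
    refine ⟨⟨by simp, List.isChain_singleton _, ?_⟩, ?_⟩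
    · intro c hc c' hc' h
      simp only [List.mem_singleton] at hc hc'; rw [hc, hc']
    · intro c hc; simp only [List.mem_singleton] at hc; rw [hc]; exact hma
  have := h2 (sqPat τ v) (sq_twoByTwo τ v) [a, b, a] [a] hp1 hp2 (by simp) (by simp)
  rw [omega_triple, omega_single] at this
  exact eq_neg_of_add_eq_zero_right this
  
end Wdefs

section Curl

variable {A : Type*} (σ : Subst A (ℤ × ℤ)) (τ : ℤ × ℤ → A)

lemma curl (hdc : σ.DominoComplete)
    (h2 : ∀ P : Finset ((ℤ × ℤ) × A), IsTwoByTwo P → σ.ConsistentOn P)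
    (v : ℤ × ℤ) :
    W1 σ τ v + W2 σ τ (v + (1,0)) = W2 σ τ v + W1 σ τ (v + (0,1)) := by
  have hbe : v + (1,0) + (0,1) = v + (1,1) := by rw [add_assoc]; norm_num
  have hde : v + (0,1) + (1,0) = v + (1,1) := by rw [add_assoc]; norm_num
  set a := (v, τ v) with ha
  set b := (v + (1,0), τ (v + (1,0))) with hb
  set d := (v + (0,1), τ (v + (0,1))) with hd
  set e := (v + (1,1), τ (v + (1,1))) with he
  have hma : a ∈ sqPat τ v := mem_sq_of τ v v (Or.inl rfl)
  have hmb : b ∈ sqPat τ v := mem_sq_of τ v _ (Or.inr (Or.inl rfl))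
  have hmd : d ∈ sqPat τ v := mem_sq_of τ v _ (Or.inr (Or.inr (Or.inl rfl)))
  have hme : e ∈ sqPat τ v := mem_sq_of τ v _ (Or.inr (Or.inr (Or.inr rfl)))
  have iss_ab : (σ.ruleVec a b).isSome := isSome_E σ hdc v (1,0) _ _ (Or.inl rfl)
  have iss_ad : (σ.ruleVec a d).isSome := isSome_E σ hdc v (0,1) _ _ (Or.inr rfl)
  have iss_be : (σ.ruleVec b e).isSome := by
    have h := isSome_E σ hdc (v + (1,0)) (0,1) (τ (v + (1,0))) (τ (v + (1,0) + (0,1)))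
      (Or.inr rfl)
    rw [hbe] at h; exact h
  have iss_de : (σ.ruleVec d e).isSome := by
    have h := isSome_E σ hdc (v + (0,1)) (1,0) (τ (v + (0,1))) (τ (v + (0,1) + (1,0)))
      (Or.inl rfl)
    rw [hde] at h; exact h
  have hWbe : W2 σ τ (v + (1,0)) = (σ.ruleVec b e).getD 0 := by
    unfold W2; rw [hbe]
  have hWde : W1 σ τ (v + (0,1)) = (σ.ruleVec d e).getD 0 := by
    unfold W1; rw [hde]
  have mkpath : ∀ x y z : (ℤ × ℤ) × A, x ∈ sqPat τ v → y ∈ sqPat τ v → z ∈ sqPat τ v →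
      (σ.ruleVec x y).isSome → (σ.ruleVec y z).isSome → σ.IsPathOf (sqPat τ v) [x, y, z] := by
    intro x y z hx hy hz s1 s2
    refine ⟨⟨by simp, ?_, ?_⟩, ?_⟩
    · unfold List.Chain'; rw [List.isChain_cons_cons]; exact ⟨s1, by simpa using s2⟩
    · intro c hc c' hc' h
      simp only [List.mem_cons, List.not_mem_nil, or_false] at hc hc'
      have m1 : c ∈ sqPat τ v := by rcases hc with h1 | h1 | h1 <;> subst h1 <;> assumption
      have m2 : c' ∈ sqPat τ v := by rcases hc' with h1 | h1 | h1 <;> subst h1 <;> assumption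
      rw [sq_snd τ v c m1, sq_snd τ v c' m2, h]
    · intro c hc
      simp only [List.mem_cons, List.not_mem_nil, or_false] at hc
      rcases hc with h1 | h1 | h1 <;> subst h1 <;> assumption
  have hp1 := mkpath a b e hma hmb hme iss_ab iss_be
  have hp2 := mkpath a d e hma hmd hme iss_ad iss_de
  have key := h2 (sqPat τ v) (sq_twoByTwo τ v) [a, b, e] [a, d, e] hp1 hp2 (by simp) (by simp)
  rw [omega_triple, omega_triple] at key
  rw [hWbe, hWde]
  exact key

end Curl

section Potential

variable {A : Type*} (σ : Subst A (ℤ × ℤ)) (τ : ℤ × ℤ → A)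

/-- the potential function -/
noncomputable def Phi (p : ℤ × ℤ) : ℤ × ℤ :=
  cumsum (fun i => W1 σ τ (i, 0)) p.1 + cumsum (fun j => W2 σ τ (p.1, j)) p.2

lemma Phi_vert (x y : ℤ) :
    Phi σ τ (x, y + 1) = Phi σ τ (x, y) + W2 σ τ (x, y) := by
  unfold Phi
  simp only
  rw [cumsum_succ]
  ring

lemma Phi_horiz (hdc : σ.DominoComplete)
    (h2 : ∀ P : Finset ((ℤ × ℤ) × A), IsTwoByTwo P → σ.ConsistentOn P)
    (x y : ℤ) :
    Phi σ τ (x + 1, y) = Phi σ τ (x, y) + W1 σ τ (x, y) := by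
  have curlxy : ∀ y0 : ℤ, W1 σ τ (x, y0) + W2 σ τ (x + 1, y0)
      = W2 σ τ (x, y0) + W1 σ τ (x, y0 + 1) := by
    intro y0
    have h := curl σ τ hdc h2 (x, y0)
    have e1 : ((x, y0) : ℤ × ℤ) + (1, 0) = (x + 1, y0) := by
      simp [Prod.ext_iff]
    have e2 : ((x, y0) : ℤ × ℤ) + (0, 1) = (x, y0 + 1) := by
      simp [Prod.ext_iff]
    rw [e1, e2] at h
    exact h
  have key : ∀ y0 : ℤ, cumsum (fun j => W2 σ τ (x + 1, j)) y0
      = cumsum (fun j => W2 σ τ (x, j)) y0 + W1 σ τ (x, y0) - W1 σ τ (x, 0) := by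
    intro y0
    induction y0 using Int.induction_on with
    | zero => simp
    | succ k ih =>
      rw [cumsum_succ, cumsum_succ]
      have hc := curlxy (k : ℤ)
      linear_combination ih + hc
    | pred k ih =>
      have e1 : (-(k : ℤ) - 1) + 1 = -(k : ℤ) := by ring
      have s1 := cumsum_succ (fun j => W2 σ τ (x + 1, j)) (-(k:ℤ) - 1)
      have s2 := cumsum_succ (fun j => W2 σ τ (x, j)) (-(k:ℤ) - 1)
      rw [e1] at s1 s2
      have hc := curlxy (-(k:ℤ) - 1)
      rw [e1] at hc
      linear_combination ih - s1 + s2 - hc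
  have hH : cumsum (fun i => W1 σ τ (i, 0)) (x + 1)
      = cumsum (fun i => W1 σ τ (i, 0)) x + W1 σ τ (x, 0) := cumsum_succ _ x
  unfold Phi
  simp only
  rw [hH, key y]
  ring

end Potential

section EdgeTelescope

variable {A : Type*} (σ : Subst A (ℤ × ℤ)) (τ : ℤ × ℤ → A)

lemma edge (hdc : σ.DominoComplete)
    (h2 : ∀ P : Finset ((ℤ × ℤ) × A), IsTwoByTwo P → σ.ConsistentOn P)
    {c c' : (ℤ × ℤ) × A} (hc2 : c.2 = τ c.1) (hc'2 : c'.2 = τ c'.1)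
    (hs : (σ.ruleVec c c').isSome) :
    (σ.ruleVec c c').getD 0 = Phi σ τ c'.1 - Phi σ τ c.1 := by
  obtain ⟨v, s⟩ := c
  obtain ⟨v', s'⟩ := c'
  simp only at hc2 hc'2
  subst hc2; subst hc'2
  have hph : ∀ w : ℤ × ℤ, Phi σ τ (w + (1,0)) = Phi σ τ w + W1 σ τ w := by
    intro w
    have hp := Phi_horiz σ τ hdc h2 w.1 w.2
    have hv : w + (1,0) = (w.1 + 1, w.2) := by simp [Prod.ext_iff]
    rw [Prod.mk.eta] at hp
    rw [← hv] at hp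
    exact hp
  have hpv : ∀ w : ℤ × ℤ, Phi σ τ (w + (0,1)) = Phi σ τ w + W2 σ τ w := by
    intro w
    have hp := Phi_vert σ τ w.1 w.2
    have hv : w + (0,1) = (w.1, w.2 + 1) := by simp [Prod.ext_iff]
    rw [Prod.mk.eta] at hp
    rw [← hv] at hp
    exact hp
  rcases diff_of_isSome σ hdc hs with h | h | h | h <;> simp only at h
  · have hv : v' = v + (1,0) := sub_eq_iff_eq_add'.mp h
    subst hv
    show W1 σ τ v = _
    linear_combination -(hph v)
  · have hv : v = v' + (1,0) := by
      have h' : v - v' = (1,0) := by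
        rw [← neg_sub v' v, h]; norm_num
      exact sub_eq_iff_eq_add'.mp h'
    subst hv
    have ha := antisym σ τ hdc h2 v' (1,0) (Or.inl rfl)
    rw [ha]
    have := hph v'
    show -(W1 σ τ v') = _
    linear_combination hph v'
  · have hv : v' = v + (0,1) := sub_eq_iff_eq_add'.mp h
    subst hv
    show W2 σ τ v = _
    linear_combination -(hpv v)
  · have hv : v = v' + (0,1) := by
      have h' : v - v' = (0,1) := by
        rw [← neg_sub v' v, h]; norm_num
      exact sub_eq_iff_eq_add'.mp h'
    subst hv
    have ha := antisym σ τ hdc h2 v' (0,1) (Or.inr rfl)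
    rw [ha]
    show -(W2 σ τ v') = _
    linear_combination hpv v'

lemma omega_cons_cons (a b : (ℤ × ℤ) × A) (rest : List ((ℤ × ℤ) × A)) :
    σ.omega (a :: b :: rest) = (σ.ruleVec a b).getD 0 + σ.omega (b :: rest) := by
  simp [Subst.omega]

lemma omega_telescope (hdc : σ.DominoComplete)
    (h2 : ∀ P : Finset ((ℤ × ℤ) × A), IsTwoByTwo P → σ.ConsistentOn P) :
    ∀ γ : List ((ℤ × ℤ) × A), γ.Chain' (fun c c' => (σ.ruleVec c c').isSome) →
      (∀ c ∈ γ, c.2 = τ c.1) → ∀ c c', γ.head? = some c → γ.getLast? = some c' →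
      σ.omega γ = Phi σ τ c'.1 - Phi σ τ c.1 := by
  intro γ
  induction γ with
  | nil => intro _ _ c c' hh _; simp at hh
  | cons a tl ih =>
    cases tl with
    | nil =>
      intro _ _ c c' hh hl
      simp only [List.head?_cons, Option.some.injEq] at hh
      simp only [List.getLast?_singleton, Option.some.injEq] at hl
      subst hh; subst hl
      rw [omega_single, sub_self]
    | cons b rest =>
      intro hch hmem c c' hh hl
      simp only [List.head?_cons, Option.some.injEq] at hh
      subst hh
      rw [List.getLast?_cons_cons] at hl
      have hab := (List.isChain_cons_cons.mp hch).1
      have hchtl := (List.isChain_cons_cons.mp hch).2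
      have hedge := edge σ τ hdc h2 (hmem a (by simp)) (hmem b (by simp)) hab
      have ihh := ih hchtl (fun x hx => hmem x (List.mem_cons_of_mem a hx)) b c' rfl hl
      rw [omega_cons_cons, hedge, ihh]
      ring

end EdgeTelescope

section Paths

variable {A : Type*} (σ : Subst A (ℤ × ℤ))

lemma path_rev {P : Finset ((ℤ × ℤ) × A)} {γ : List ((ℤ × ℤ) × A)} {x y : (ℤ × ℤ) × A}
    (hp : σ.IsPathOf P γ) (hh : γ.head? = some x) (hl : γ.getLast? = some y) :
    ∃ δ, σ.IsPathOf P δ ∧ δ.head? = some y ∧ δ.getLast? = some x := by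
  obtain ⟨⟨hne, hch, hinj⟩, hmem⟩ := hp
  refine ⟨γ.reverse, ⟨⟨by simpa using hne, ?_, ?_⟩, ?_⟩, ?_, ?_⟩
  · unfold List.Chain'; rw [List.isChain_reverse]
    exact hch.imp (fun a b h => ruleVec_symm_isSome σ h)
  · intro c hc c' hc'
    exact hinj c (by simpa using hc) c' (by simpa using hc')
  · intro c hc; exact hmem c (by simpa using hc)
  · rw [List.head?_reverse]; exact hl
  · rw [List.getLast?_reverse]; exact hh

lemma path_app {P : Finset ((ℤ × ℤ) × A)} (hPat : IsPattern P)
    {γ δ : List ((ℤ × ℤ) × A)} {x m y : (ℤ × ℤ) × A}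
    (hpγ : σ.IsPathOf P γ) (hpδ : σ.IsPathOf P δ)
    (hhγ : γ.head? = some x) (hlγ : γ.getLast? = some m)
    (hhδ : δ.head? = some m) (hlδ : δ.getLast? = some y) :
    ∃ ε, σ.IsPathOf P ε ∧ ε.head? = some x ∧ ε.getLast? = some y := by
  obtain ⟨⟨hneγ, hchγ, _⟩, hmemγ⟩ := hpγ
  obtain ⟨⟨hneδ, hchδ, _⟩, hmemδ⟩ := hpδ
  cases δ with
  | nil => simp at hhδ
  | cons m0 δt =>
    simp only [List.head?_cons, Option.some.injEq] at hhδ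
    subst hhδ
    cases δt with
    | nil =>
      simp only [List.getLast?_singleton, Option.some.injEq] at hlδ
      subst hlδ
      exact ⟨γ, ⟨⟨hneγ, hchγ, fun c hc c' hc' => hPat c (hmemγ c hc) c' (hmemγ c' hc')⟩,
        hmemγ⟩, hhγ, hlγ⟩
    | cons r rest =>
      refine ⟨γ ++ (r :: rest), ⟨⟨?_, ?_, ?_⟩, ?_⟩, ?_, ?_⟩
      · intro h
        exact hneγ (List.append_eq_nil_iff.mp h).1
      · refine List.IsChain.append hchγ (List.isChain_cons_cons.mp hchδ).2 ?_
        intro p hp q hq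
        rw [hlγ, Option.mem_some_iff] at hp
        simp only [List.head?_cons, Option.mem_some_iff] at hq
        subst hp; subst hq
        exact (List.isChain_cons_cons.mp hchδ).1
      · intro c hc c' hc'
        have m1 : c ∈ P := by
          rcases List.mem_append.mp hc with h | h
          · exact hmemγ c h
          · exact hmemδ c (List.mem_cons_of_mem m0 h)
        have m2 : c' ∈ P := by
          rcases List.mem_append.mp hc' with h | h
          · exact hmemγ c' h
          · exact hmemδ c' (List.mem_cons_of_mem m0 h)
        exact hPat c m1 c' m2
      · intro c hc
        rcases List.mem_append.mp hc with h | h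
        · exact hmemγ c h
        · exact hmemδ c (List.mem_cons_of_mem m0 h)
      · rw [List.head?_append, hhγ]; rfl
      · rw [List.getLast?_append]
        rw [List.getLast?_cons_cons] at hlδ
        rw [hlδ]; rfl

end Paths

section Covered

variable {A : Type*} (σ : Subst A (ℤ × ℤ))

lemma covered_of_twoByTwo (hdc : σ.DominoComplete) {P : Finset ((ℤ × ℤ) × A)}
    (hTT : IsTwoByTwo P) : σ.Covered P := by
  obtain ⟨hPat, w, hsupp⟩ := hTT
  have exm : ∀ u : ℤ × ℤ, u ∈ ({w, w + (1,0), w + (0,1), w + (1,1)} : Finset (ℤ × ℤ)) →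
      ∃ t, (u, t) ∈ P := by
    intro u hu
    rw [← hsupp] at hu
    obtain ⟨c, hc, hcu⟩ := Finset.mem_image.mp hu
    exact ⟨c.2, by rw [show (u, c.2) = c by rw [← hcu]]; exact hc⟩
  obtain ⟨t00, ha⟩ := exm w (by simp)
  obtain ⟨t10, hb⟩ := exm (w + (1,0)) (by simp)
  obtain ⟨t01, hd⟩ := exm (w + (0,1)) (by simp)
  obtain ⟨t11, he⟩ := exm (w + (1,1)) (by simp)
  set a := (w, t00) with hadef
  set b := (w + (1,0), t10) with hbdef
  set d := (w + (0,1), t01) with hddef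
  set e := (w + (1,1), t11) with hedef
  have hbe : w + (1,0) + (0,1) = w + (1,1) := by rw [add_assoc]; norm_num
  have hc4 : ∀ c ∈ P, c = a ∨ c = b ∨ c = d ∨ c = e := by
    intro c hc
    have h1 : c.1 ∈ P.image Prod.fst := Finset.mem_image_of_mem _ hc
    rw [hsupp] at h1
    simp only [Finset.mem_insert, Finset.mem_singleton] at h1
    rcases h1 with h | h | h | h
    · exact Or.inl (hPat c hc a ha h)
    · exact Or.inr (Or.inl (hPat c hc b hb h))
    · exact Or.inr (Or.inr (Or.inl (hPat c hc d hd h)))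
    · exact Or.inr (Or.inr (Or.inr (hPat c hc e he h)))
  have mkP : ∀ γ : List ((ℤ × ℤ) × A), γ ≠ [] →
      γ.Chain' (fun x y => (σ.ruleVec x y).isSome) → (∀ x ∈ γ, x ∈ P) → σ.IsPathOf P γ :=
    fun γ h1 h2' h3 => ⟨⟨h1, h2', fun x hx y hy => hPat x (h3 x hx) y (h3 y hy)⟩, h3⟩
  have sab : (σ.ruleVec a b).isSome := isSome_E σ hdc w (1,0) _ _ (Or.inl rfl)
  have sad : (σ.ruleVec a d).isSome := isSome_E σ hdc w (0,1) _ _ (Or.inr rfl)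
  have sbe : (σ.ruleVec b e).isSome := by
    have h := isSome_E σ hdc (w + (1,0)) (0,1) t10 t11 (Or.inr rfl)
    rw [hbe] at h; exact h
  have toA : ∀ c, (c = a ∨ c = b ∨ c = d ∨ c = e) →
      ∃ γ, σ.IsPathOf P γ ∧ γ.head? = some a ∧ γ.getLast? = some c := by
    intro c hc
    rcases hc with h | h | h | h <;> subst h
    · exact ⟨[a], mkP [a] (by simp) (List.isChain_singleton _) (by simpa using ha), by simp, by simp⟩
    · refine ⟨[a, b], mkP [a, b] (by simp) ?_ ?_, by simp, by simp⟩
      · exact List.isChain_pair.mpr sab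
      · intro x hx
        simp only [List.mem_cons, List.not_mem_nil, or_false] at hx
        rcases hx with h | h <;> subst h <;> assumption
    · refine ⟨[a, d], mkP [a, d] (by simp) ?_ ?_, by simp, by simp⟩
      · exact List.isChain_pair.mpr sad
      · intro x hx
        simp only [List.mem_cons, List.not_mem_nil, or_false] at hx
        rcases hx with h | h <;> subst h <;> assumption
    · refine ⟨[a, b, e], mkP [a, b, e] (by simp) ?_ ?_, by simp, by simp⟩
      · unfold List.Chain'; rw [List.isChain_cons_cons]; exact ⟨sab, by simpa using sbe⟩
      · intro x hx
        simp only [List.mem_cons, List.not_mem_nil, or_false] at hx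
        rcases hx with h | h | h <;> subst h <;> assumption
  intro c hc c' hc'
  obtain ⟨γ1, hγ1, hh1, hl1⟩ := toA c (hc4 c hc)
  obtain ⟨γ2, hγ2, hh2, hl2⟩ := toA c' (hc4 c' hc')
  obtain ⟨δ, hδ, hhδ, hlδ⟩ := path_rev σ hγ1 hh1 hl1
  obtain ⟨ε, hε, hhε, hlε⟩ := path_app σ hPat hδ hγ2 hhδ hlδ hh2 hl2
  exact ⟨ε, hε, hhε, hlε⟩

end Covered

/-- Theorem `deccons`.  A two-dimensional domino-complete
substitution is consistent if and only if it is consistent on every `2 × 2`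
pattern. -/
theorem dominoComplete_consistent_iff_twoByTwo {A : Type*} [Fintype A]
    (σ : Subst A (ℤ × ℤ)) (hdc : σ.DominoComplete) :
    σ.Consistent ↔ ∀ P : Finset ((ℤ × ℤ) × A), IsTwoByTwo P → σ.ConsistentOn P := by
  constructor
  · intro hcons P hTT
    exact hcons P hTT.1 (covered_of_twoByTwo σ hdc hTT)
  · intro h2 P hP _hcov γ γ' hγ hγ' hh hl
    obtain ⟨⟨hne, hch, _⟩, hmem⟩ := hγ
    obtain ⟨⟨hne', hch', _⟩, hmem'⟩ := hγ'
    cases hhd : γ.head? with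
    | none => exact absurd (List.head?_eq_none_iff.mp hhd) hne
    | some c =>
    cases hlt : γ.getLast? with
    | none => exact absurd (List.getLast?_eq_none_iff.mp hlt) hne
    | some c' =>
    have hτ : ∃ τ : ℤ × ℤ → A, ∀ d ∈ P, d.2 = τ d.1 := by
      refine ⟨fun v => if h : ∃ t, (v, t) ∈ P then h.choose else c.2, ?_⟩
      intro d hd
      have hex : ∃ t, (d.1, t) ∈ P := ⟨d.2, by rw [Prod.mk.eta]; exact hd⟩
      have hde : d = (d.1, hex.choose) := hP d hd _ hex.choose_spec rfl
      simp only [dif_pos hex]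
      exact congrArg Prod.snd hde
    obtain ⟨τ, hτ⟩ := hτ
    rw [omega_telescope σ τ hdc h2 γ hch (fun x hx => hτ x (hmem x hx)) c c' hhd hlt,
      omega_telescope σ τ hdc h2 γ' hch' (fun x hx => hτ x (hmem' x hx)) c c'
        (hh ▸ hhd) (hl ▸ hlt)]
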